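/- Let p be an odd prime and let A = {x_1, ..., x_n} be a finite set of nonzero vectors in F_p^2 which spans all p+1 nonzero directions from the origin, i.e., for every nonzero vector v in F_p^2 there exist an index i and a nonzero scalar t in F_p such that x_i = t·v. Then there exists a nonempty subset I of {1, ..., n} such that the sum over i in I of x_i equals (0,0). -/

import Mathlib

open Finset AddMonoidAlgebra

namespace ZeroSumAux

variable {p : ℕ}

lemma expand {ι : Type*} [DecidableEq ι] (s : Finset ι) (f : ι → (ZMod p × ZMod p)) :
    ∏ i ∈ s, (1 - AddMonoidAlgebra.single (f i) (1 : ZMod p)) =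
    ∑ S ∈ s.powerset, AddMonoidAlgebra.single (∑ i ∈ S, f i) ((-1) ^ S.card : ZMod p) := by
  classical
  induction s using Finset.induction_on with
  | empty =>
      simp [AddMonoidAlgebra.one_def]
  | insert _ _ ha ih =>
      rename_i a s
      have hinj : ∀ S ∈ s.powerset, ∀ T ∈ s.powerset, insert a S = insert a T → S = T := by
        intro S hS T hT hST
        have haS : a ∉ S := fun h => ha (Finset.mem_powerset.mp hS h)
        have haT : a ∉ T := fun h => ha (Finset.mem_powerset.mp hT h)
        have := congrArg (Finset.erase · a) hST
        simpa [Finset.erase_insert haS, Finset.erase_insert haT] using this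
      have hdisj : Disjoint s.powerset (s.powerset.image (insert a)) := by
        rw [Finset.disjoint_left]
        intro S hS hS'
        obtain ⟨T, hT, rfl⟩ := Finset.mem_image.mp hS'
        exact ha (Finset.mem_powerset.mp hS (Finset.mem_insert_self a T))
      rw [Finset.prod_insert ha, ih, Finset.powerset_insert, Finset.sum_union hdisj,
        Finset.sum_image hinj, sub_mul, one_mul, Finset.mul_sum, sub_eq_add_neg,
        ← Finset.sum_neg_distrib]
      congr 1
      refine Finset.sum_congr rfl fun S hS => ?_
      have haS : a ∉ S := fun h => ha (Finset.mem_powerset.mp hS h)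
      rw [AddMonoidAlgebra.single_mul_single, Finset.sum_insert haS,
        Finset.card_insert_of_notMem haS, ← AddMonoidAlgebra.single_neg]
      congr 1
      ring

end ZeroSumAux

namespace ZeroSumAux

variable {p : ℕ}

lemma csum (S : Finset (ZMod p)) :
    ∑ m ∈ S, ((1 : ZMod p), m) = ((S.card : ZMod p), ∑ m ∈ S, m) := by
  apply Prod.ext
  · simp [Prod.fst_sum]
  · simp [Prod.snd_sum]

lemma sum_univ_zmod [Fact p.Prime] (hodd : Odd p) : ∑ m : ZMod p, m = 0 := by
  have h : ∑ m : ZMod p, m = ∑ m : ZMod p, -m :=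
    Fintype.sum_equiv (Equiv.neg _) _ _ (by simp)
  have h2 : (2 : ZMod p) * ∑ m : ZMod p, m = 0 := by
    rw [two_mul]
    nth_rewrite 2 [h]
    rw [← Finset.sum_add_distrib]
    simp
  have hp2 : (2 : ZMod p) ≠ 0 := by
    intro h0
    have h0' : ((2 : ℕ) : ZMod p) = 0 := by exact_mod_cast h0
    have hd := (ZMod.natCast_eq_zero_iff 2 p).mp h0'
    have hpe := (Nat.prime_dvd_prime_iff_eq (Fact.out : p.Prime) Nat.prime_two).mp hd
    exact (Nat.not_even_iff_odd.mpr hodd) (hpe ▸ even_two)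
  have := mul_eq_zero.mp h2
  tauto

lemma key [Fact p.Prime] (hodd : Odd p) :
    (∏ m : ZMod p, (1 - AddMonoidAlgebra.single ((1 : ZMod p), m) (1 : ZMod p))) *
      (1 - AddMonoidAlgebra.single (((0 : ZMod p), (1 : ZMod p)) : ZMod p × ZMod p)
        (1 : ZMod p)) = 0 := by
  classical
  set w : ZMod p × ZMod p := ((0 : ZMod p), (1 : ZMod p)) with hw
  rw [expand Finset.univ (fun m => ((1 : ZMod p), m))]
  rw [mul_sub, mul_one]
  rw [sub_eq_zero, Finset.sum_mul]
  simp only [AddMonoidAlgebra.single_mul_single, mul_one]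
  -- goal : ∑ S, single (Σ + w) ((-1)^#S) = ∑ S, single Σ ((-1)^#S)
  have hnum : Fintype.card (ZMod p) = p := ZMod.card p
  have huniv_ne : (∅ : Finset (ZMod p)) ≠ Finset.univ := by
    have : (Finset.univ : Finset (ZMod p)).Nonempty := Finset.univ_nonempty
    exact fun h => (by simpa [← h] using this)
  set E : Finset (Finset (ZMod p)) := {∅, Finset.univ} with hE
  have hEP : E ⊆ (Finset.univ : Finset (ZMod p)).powerset := by
    intro S hS; simp
  have hcuniv : ∑ m ∈ (Finset.univ : Finset (ZMod p)), ((1 : ZMod p), m) = 0 := by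
    rw [csum, sum_univ_zmod hodd]
    simp [Finset.card_univ, hnum]
  have hEzero : ∀ v : ZMod p × ZMod p,
      ∑ S ∈ E, AddMonoidAlgebra.single (∑ m ∈ S, ((1 : ZMod p), m) + v)
        ((-1) ^ S.card : ZMod p) = 0 := by
    intro v
    rw [hE, Finset.sum_pair huniv_ne]
    rw [hcuniv]
    simp only [Finset.sum_empty, Finset.card_empty, pow_zero, zero_add,
      Finset.card_univ, hnum, Odd.neg_one_pow hodd]
    rw [← AddMonoidAlgebra.single_add]
    simp
  have split : ∀ G : Finset (ZMod p) → AddMonoidAlgebra (ZMod p) (ZMod p × ZMod p),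
      ∑ S ∈ (Finset.univ : Finset (ZMod p)).powerset, G S =
      (∑ S ∈ (Finset.univ : Finset (ZMod p)).powerset \ E, G S) + ∑ S ∈ E, G S :=
    fun G => (Finset.sum_sdiff hEP).symm
  rw [split, split]
  rw [hEzero w]
  have hEzero0 : ∑ S ∈ E, AddMonoidAlgebra.single (∑ m ∈ S, ((1 : ZMod p), m))
      ((-1) ^ S.card : ZMod p) = 0 := by
    have := hEzero 0
    simpa using this
  rw [hEzero0, add_zero, add_zero]
  -- now the bijection
  have hmemD : ∀ S : Finset (ZMod p),
      S ∈ (Finset.univ : Finset (ZMod p)).powerset \ E ↔ S ≠ ∅ ∧ S ≠ Finset.univ := by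
    intro S; simp [hE]
  have hcardcast : ∀ S : Finset (ZMod p), S ≠ ∅ → S ≠ Finset.univ →
      ((S.card : ZMod p)) ≠ 0 := by
    intro S h1 h2
    rw [Ne, ZMod.natCast_eq_zero_iff]
    intro hdvd
    have hpos : 0 < S.card := Finset.card_pos.mpr (Finset.nonempty_of_ne_empty h1)
    have hlt : S.card < p := by
      have := Finset.card_lt_card (Finset.ssubset_univ_iff.mpr h2)
      simpa [Finset.card_univ, hnum] using this
    exact Nat.not_dvd_of_pos_of_lt hpos hlt hdvd
  have himgmem : ∀ (S : Finset (ZMod p)) (c : ZMod p), S ≠ ∅ → S ≠ Finset.univ →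
      (S.image (fun x => x + c)) ≠ ∅ ∧ (S.image (fun x => x + c)) ≠ Finset.univ := by
    intro S c h1 h2
    have hcard : (S.image (fun x => x + c)).card = S.card :=
      Finset.card_image_of_injective _ (add_left_injective _)
    have hlt : S.card < p := by
      have := Finset.card_lt_card (Finset.ssubset_univ_iff.mpr h2)
      simpa [Finset.card_univ, hnum] using this
    constructor
    · exact (Finset.Nonempty.image (Finset.nonempty_of_ne_empty h1) _).ne_empty
    · intro h
      have := congrArg Finset.card h
      rw [hcard, Finset.card_univ, hnum] at this
      omega
  have hcomp : ∀ (S : Finset (ZMod p)) (c d : ZMod p), c + d = 0 →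
      (S.image (fun x => x + c)).image (fun x => x + d) = S := by
    intro S c d hcd
    rw [Finset.image_image]
    have : ((fun x => x + d) ∘ fun x => x + c) = id := by
      funext x
      simp [Function.comp, add_assoc, hcd]
    rw [this, Finset.image_id]
  refine Finset.sum_nbij' (fun S => S.image (fun x => x + (-((S.card : ZMod p))⁻¹)))
    (fun T => T.image (fun x => x + ((T.card : ZMod p))⁻¹)) ?_ ?_ ?_ ?_ ?_
  · intro S hS
    obtain ⟨h1, h2⟩ := (hmemD S).mp hS
    exact (hmemD _).mpr (himgmem S _ h1 h2)
  · intro T hT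
    obtain ⟨h1, h2⟩ := (hmemD T).mp hT
    exact (hmemD _).mpr (himgmem T _ h1 h2)
  · intro S hS
    have hcard : (S.image (fun x => x + (-((S.card : ZMod p))⁻¹))).card = S.card :=
      Finset.card_image_of_injective _ (add_left_injective _)
    simp only [hcard]
    exact hcomp S _ _ (neg_add_cancel _)
  · intro T hT
    have hcard : (T.image (fun x => x + ((T.card : ZMod p))⁻¹)).card = T.card :=
      Finset.card_image_of_injective _ (add_left_injective _)
    simp only [hcard]
    exact hcomp T _ _ (add_neg_cancel _)
  · intro S hS
    obtain ⟨h1, h2⟩ := (hmemD S).mp hS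
    set c : ZMod p := -((S.card : ZMod p))⁻¹ with hc
    have hcard : (S.image (fun x => x + c)).card = S.card :=
      Finset.card_image_of_injective _ (add_left_injective _)
    have hinj : ∀ a ∈ S, ∀ b ∈ S, a + c = b + c → a = b := fun a _ b _ h => by
      simpa using add_left_injective c h
    have e1 : ∑ m ∈ S.image (fun x => x + c), ((1 : ZMod p), m) + w
        = ∑ m ∈ S, ((1 : ZMod p), m) := by
      rw [Finset.sum_image hinj]
      apply Prod.ext
      · rw [Prod.fst_add, Prod.fst_sum, Prod.fst_sum]
        simp [hw]
      · rw [Prod.snd_add, Prod.snd_sum, Prod.snd_sum]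
        simp only [hw]
        rw [Finset.sum_add_distrib, Finset.sum_const, nsmul_eq_mul, hc, mul_neg,
          mul_inv_cancel₀ (hcardcast S h1 h2)]
        ring
    rw [hcard, e1]

end ZeroSumAux

namespace ZeroSumAux

variable {p : ℕ}

lemma one_sub_single_dvd [Fact p.Prime] (v : ZMod p × ZMod p) (t : ZMod p) :
    (1 - AddMonoidAlgebra.single v (1 : ZMod p)) ∣
      (1 - AddMonoidAlgebra.single (t • v) (1 : ZMod p)) := by
  have h1 : t • v = t.val • v := by
    rw [← Nat.cast_smul_eq_nsmul (ZMod p), ZMod.natCast_val, ZMod.cast_id]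
  have h2 : AddMonoidAlgebra.single (t.val • v) (1 : ZMod p)
      = (AddMonoidAlgebra.single v (1 : ZMod p)) ^ t.val := by
    rw [AddMonoidAlgebra.single_pow, one_pow]
  refine ⟨∑ i ∈ Finset.range t.val, (AddMonoidAlgebra.single v (1 : ZMod p)) ^ i, ?_⟩
  rw [h1, h2]
  have hg := geom_sum_mul (AddMonoidAlgebra.single v (1 : ZMod p)) t.val
  linear_combination hg

end ZeroSumAux

theorem zero_sum_subset_of_all_directions (p : ℕ) (hp : p.Prime) (hodd : Odd p)
    (A : Finset (ZMod p × ZMod p))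
    (hA0 : ∀ x ∈ A, x ≠ (0, 0))
    (hdir : ∀ v : ZMod p × ZMod p, v ≠ (0, 0) →
      ∃ x ∈ A, ∃ t : ZMod p, t ≠ 0 ∧ x = t • v) :
    ∃ B ⊆ A, B.Nonempty ∧ ∑ x ∈ B, x = (0, 0) := by
  classical
  haveI : Fact p.Prime := ⟨hp⟩
  by_contra hcon
  push_neg at hcon
  have hzero : ∀ S, S ⊆ A → S ≠ ∅ → ∑ x ∈ S, x ≠ (0 : ZMod p × ZMod p) := by
    intro S hS hSne h0
    exact hcon S hS (Finset.nonempty_of_ne_empty hSne) (by rw [Prod.mk_zero_zero]; exact h0)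
  -- choose representatives
  have h' : ∀ v : ZMod p × ZMod p, ∃ x : ZMod p × ZMod p,
      v ≠ 0 → (x ∈ A ∧ ∃ t : ZMod p, t ≠ 0 ∧ x = t • v) := by
    intro v
    by_cases h : v = 0
    · exact ⟨0, fun hv => absurd h hv⟩
    · obtain ⟨x, hxA, t, ht, hxt⟩ := hdir v (by rw [Prod.mk_zero_zero]; exact h)
      exact ⟨x, fun _ => ⟨hxA, t, ht, hxt⟩⟩
  choose r hr using h'
  set C : Finset (ZMod p × ZMod p) :=
    insert ((0 : ZMod p), (1 : ZMod p))
      ((Finset.univ : Finset (ZMod p)).image fun m => ((1 : ZMod p), m)) with hC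
  have hone : (1 : ZMod p) ≠ 0 := one_ne_zero
  have hCne : ∀ c ∈ C, c ≠ (0 : ZMod p × ZMod p) := by
    intro c hc
    rw [hC, Finset.mem_insert] at hc
    rcases hc with h | h
    · rw [h]
      intro hcon'
      rw [← Prod.mk_zero_zero, Prod.mk.injEq] at hcon'
      exact hone hcon'.2
    · obtain ⟨m, _, rfl⟩ := Finset.mem_image.mp h
      intro hcon'
      rw [← Prod.mk_zero_zero, Prod.mk.injEq] at hcon'
      exact hone hcon'.1
  -- r is injective on C
  have hinjC : ∀ c ∈ C, ∀ c' ∈ C, r c = r c' → c = c' := by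
    intro c hc c' hc' hrr
    obtain ⟨_, t, ht, hxt⟩ := hr c (hCne c hc)
    obtain ⟨_, t', ht', hxt'⟩ := hr c' (hCne c' hc')
    have heq : t • c = t' • c' := by rw [← hxt, ← hxt', hrr]
    rw [hC, Finset.mem_insert] at hc hc'
    have h1 : t * c.1 = t' * c'.1 := congrArg Prod.fst heq
    have h2 : t * c.2 = t' * c'.2 := congrArg Prod.snd heq
    rcases hc with h | h <;> rcases hc' with h' | h'
    · rw [h, h']
    · obtain ⟨m, _, rfl⟩ := Finset.mem_image.mp h'
      rw [h] at h1
      simp at h1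
      exact absurd h1.symm ht'
    · obtain ⟨m, _, rfl⟩ := Finset.mem_image.mp h
      rw [h'] at h1
      simp at h1
      exact absurd h1 ht
    · obtain ⟨m, _, rfl⟩ := Finset.mem_image.mp h
      obtain ⟨m', _, rfl⟩ := Finset.mem_image.mp h'
      simp only [mul_one] at h1
      subst h1
      simp only at h2
      have : m = m' := mul_left_cancel₀ ht h2
      rw [this]
  -- the product over C vanishes
  have h01 : ((0 : ZMod p), (1 : ZMod p)) ∉
      (Finset.univ : Finset (ZMod p)).image (fun m => ((1 : ZMod p), m)) := by
    intro h
    obtain ⟨m, _, hm⟩ := Finset.mem_image.mp h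
    rw [Prod.mk.injEq] at hm
    exact hone hm.1
  have hinjm : ∀ a ∈ (Finset.univ : Finset (ZMod p)), ∀ b ∈ Finset.univ,
      ((1 : ZMod p), a) = ((1 : ZMod p), b) → a = b := by
    intro a _ b _ h
    exact (Prod.mk.injEq _ _ _ _ ▸ h).2
  have hprodC : ∏ c ∈ C, (1 - AddMonoidAlgebra.single c (1 : ZMod p)) = 0 := by
    rw [hC, Finset.prod_insert h01, Finset.prod_image hinjm, mul_comm]
    exact ZeroSumAux.key hodd
  -- divisibility chain
  have hdvd1 : ∏ c ∈ C, (1 - AddMonoidAlgebra.single c (1 : ZMod p)) ∣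
      ∏ c ∈ C, (1 - AddMonoidAlgebra.single (r c) (1 : ZMod p)) := by
    refine Finset.prod_dvd_prod_of_dvd _ _ fun c hc => ?_
    obtain ⟨_, t, _, hxt⟩ := hr c (hCne c hc)
    rw [hxt]
    exact ZeroSumAux.one_sub_single_dvd c t
  have hre : ∏ c ∈ C, (1 - AddMonoidAlgebra.single (r c) (1 : ZMod p)) =
      ∏ x ∈ C.image r, (1 - AddMonoidAlgebra.single x (1 : ZMod p)) :=
    (Finset.prod_image (f := fun x => 1 - AddMonoidAlgebra.single x (1 : ZMod p)) (g := r) hinjC).symm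
  have hsub : C.image r ⊆ A := by
    intro x hx
    obtain ⟨c, hc, rfl⟩ := Finset.mem_image.mp hx
    exact (hr c (hCne c hc)).1
  have hdvd2 : ∏ x ∈ C.image r, (1 - AddMonoidAlgebra.single x (1 : ZMod p)) ∣
      ∏ x ∈ A, (1 - AddMonoidAlgebra.single x (1 : ZMod p)) :=
    Finset.prod_dvd_prod_of_subset _ _ _ hsub
  have hP0 : ∏ x ∈ A, (1 - AddMonoidAlgebra.single x (1 : ZMod p)) = 0 := by
    have : (0 : AddMonoidAlgebra (ZMod p) (ZMod p × ZMod p)) ∣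
        ∏ x ∈ A, (1 - AddMonoidAlgebra.single x (1 : ZMod p)) := by
      rw [← hprodC]
      exact dvd_trans hdvd1 (hre ▸ hdvd2)
    exact zero_dvd_iff.mp this
  rw [ZeroSumAux.expand A (fun x => x)] at hP0
  have h2 : (∑ S ∈ A.powerset, AddMonoidAlgebra.single (∑ i ∈ S, i) ((-1) ^ S.card : ZMod p)).coeff 0
      = ∑ S ∈ A.powerset, (AddMonoidAlgebra.single (∑ i ∈ S, i) ((-1) ^ S.card : ZMod p)).coeff 0 := by
    rw [AddMonoidAlgebra.coeff_sum]; exact Finset.sum_apply' 0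
  have h00 : ∑ S ∈ A.powerset,
      (AddMonoidAlgebra.single (∑ i ∈ S, i) ((-1) ^ S.card : ZMod p)).coeff 0 = 0 := by
    rw [← h2, hP0]; rfl
  rw [Finset.sum_eq_single_of_mem (∅ : Finset (ZMod p × ZMod p))
      (Finset.mem_powerset.mpr (Finset.empty_subset A)) ?_] at h00
  · simp [AddMonoidAlgebra.coeff_single, Finsupp.single_apply] at h00
  · intro S hS hSne
    have hne : ∑ x ∈ S, x ≠ (0 : ZMod p × ZMod p) :=
      hzero S (Finset.mem_powerset.mp hS) hSne
    rw [AddMonoidAlgebra.coeff_single, Finsupp.single_apply, if_neg hne]
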